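/- Let R be a commutative ring. An ideal I of R is a principal element of the quantale Idl(R) — that is, I is both meet principal (I·((J : I) ⊓ B) = J ⊓ (I·B) for all ideals J, B) and join principal ((((I·J) ⊔ A) : I) = J ⊔ (A : I) for all ideals J, A) — if and only if I is finitely generated and locally principal, i.e. I is finitely generated and there exist finitely many elements f₁, …, fₙ ∈ R generating the unit ideal such that for each i the image of I under the localization map R → R[fᵢ⁻¹] generates a principal ideal of R[fᵢ⁻¹]. -/

import Mathlib

open Ideal Submodule

section PrincipalIdeal
variable {S : Type*} [CommRing S]

/-- Principal ideals are meet principal elements. -/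
lemma span_singleton_meetP (a : S) (J B : Ideal S) :
    span {a} * (J.colon (span {a}) ⊓ B) = J ⊓ (span {a} * B) := by
  apply le_antisymm
  · refine le_inf ?_ (Ideal.mul_mono_right inf_le_right)
    refine Ideal.mul_le.2 fun r hr s hs => ?_
    rcases Ideal.mem_span_singleton'.1 hr with ⟨c, rfl⟩
    have h := Submodule.mem_colon.1 hs.1 a (Ideal.mem_span_singleton_self a)
    rw [smul_eq_mul] at h
    have : c * a * s = c * (s * a) := by ring
    rw [this]
    exact J.mul_mem_left _ h
  · rintro x hx
    rw [Submodule.mem_inf] at hx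
    obtain ⟨hxJ, hxB⟩ := hx
    rcases Ideal.mem_span_singleton_mul.1 hxB with ⟨b, hb, rfl⟩
    have hbc : b ∈ J.colon (span {a}) := by
      rw [Submodule.mem_colon]
      intro p hp
      rcases Ideal.mem_span_singleton'.1 hp with ⟨c, rfl⟩
      rw [smul_eq_mul]
      have : b * (c * a) = c * (a * b) := by ring
      rw [this]
      exact J.mul_mem_left _ hxJ
    exact Ideal.mul_mem_mul (Ideal.mem_span_singleton_self a)
      (Submodule.mem_inf.2 ⟨hbc, hb⟩)

/-- Principal ideals are join principal elements. -/
lemma span_singleton_joinP (a : S) (J A : Ideal S) :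
    (span {a} * J ⊔ A).colon (span {a}) = J ⊔ A.colon (span {a}) := by
  apply le_antisymm
  · intro x hx
    have hxa : x * a ∈ span {a} * J ⊔ A := by
      have := Submodule.mem_colon.1 hx a (Ideal.mem_span_singleton_self a)
      rwa [smul_eq_mul] at this
    rcases Submodule.mem_sup.1 hxa with ⟨y, hy, z, hz, hxy⟩
    rcases Ideal.mem_span_singleton_mul.1 hy with ⟨j, hj, rfl⟩
    have hxj : x - j ∈ A.colon (span {a}) := by
      rw [Submodule.mem_colon]
      intro p hp
      rcases Ideal.mem_span_singleton'.1 hp with ⟨c, rfl⟩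
      rw [smul_eq_mul]
      have : (x - j) * (c * a) = c * (x * a - a * j) := by ring
      rw [this, ← hxy, add_sub_cancel_left]
      exact A.mul_mem_left _ hz
    have : x = j + (x - j) := by ring
    rw [this]
    exact Submodule.add_mem_sup hj hxj
  · refine sup_le ?_ (Submodule.colon_mono le_sup_right le_rfl)
    intro j hj
    rw [Submodule.mem_colon]
    intro p hp
    rw [smul_eq_mul]
    have h : j * p = p * j := mul_comm _ _
    rw [h]
    exact Submodule.mem_sup_left (Ideal.mul_mem_mul hp hj)

end PrincipalIdeal

section LocalizationAux

variable {S : Type*} [CommRing S] (S' : Type*) [CommRing S'] [Algebra S S']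

lemma loc_map_inf (M : Submonoid S) [IsLocalization M S'] (J B : Ideal S) :
    J.map (algebraMap S S') ⊓ B.map (algebraMap S S')
      ≤ (J ⊓ B).map (algebraMap S S') := by
  intro z hz
  rw [Submodule.mem_inf] at hz
  obtain ⟨hzJ, hzB⟩ := hz
  obtain ⟨⟨j, s⟩, h1⟩ := (IsLocalization.mem_map_algebraMap_iff M S').1 hzJ
  obtain ⟨⟨b, t⟩, h2⟩ := (IsLocalization.mem_map_algebraMap_iff M S').1 hzB
  dsimp only at h1 h2
  have key : algebraMap S S' ((j : S) * t) = algebraMap S S' ((b : S) * s) := by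
    rw [_root_.map_mul, _root_.map_mul, ← h1, ← h2]; ring
  obtain ⟨u, hu⟩ := (IsLocalization.eq_iff_exists M S').1 key
  refine (IsLocalization.mem_map_algebraMap_iff M S').2
    ⟨⟨⟨(u : S) * ((j : S) * t), ?_⟩, u * s * t⟩, ?_⟩
  · refine Submodule.mem_inf.2 ⟨?_, ?_⟩
    · exact Ideal.mul_mem_left _ _ (Ideal.mul_mem_right _ _ j.2)
    · rw [hu]
      exact Ideal.mul_mem_left _ _ (Ideal.mul_mem_right _ _ b.2)
  · simp only [Submonoid.coe_mul, _root_.map_mul]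
    rw [← h1]
    ring

lemma loc_colon_le_map_colon (M : Submonoid S) [IsLocalization M S'] {I : Ideal S} (hI : I.FG) (A : Ideal S) :
    (A.map (algebraMap S S')).colon (I.map (algebraMap S S'))
      ≤ (A.colon I).map (algebraMap S S') := by
  obtain ⟨T, hT⟩ := hI
  intro z hz
  obtain ⟨⟨r, s⟩, hrs⟩ := IsLocalization.surj M z
  dsimp only at hrs
  -- for each generator t, get witnesses
  have H : ∀ t : T, ∃ (st : M) (ut : M), (ut : S) * ((r * t * st : S)) ∈ A := by
    rintro ⟨t, ht⟩
    have htI : t ∈ I := by rw [← hT]; exact Ideal.subset_span ht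
    have hzt : z * algebraMap S S' t ∈ A.map (algebraMap S S') := by
      have := Submodule.mem_colon.1 hz (algebraMap S S' t)
        (Ideal.mem_map_of_mem _ htI)
      rwa [smul_eq_mul] at this
    obtain ⟨⟨x, st⟩, hx⟩ := (IsLocalization.mem_map_algebraMap_iff M S').1 hzt
    dsimp only at hx
    have key : algebraMap S S' (r * t * st) = algebraMap S S' ((x : S) * s) := by
      simp only [Submonoid.coe_mul, _root_.map_mul]
      rw [← hrs, ← hx]
      ring
    obtain ⟨ut, hut⟩ := (IsLocalization.eq_iff_exists M S').1 key
    refine ⟨st, ut, ?_⟩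
    rw [hut]
    exact A.mul_mem_left _ (A.mul_mem_right _ x.2)
  choose st ut hA using H
  classical
  set w : M := ∏ t ∈ T.attach, (st t * ut t) with hw
  have hwmem : ∀ t ∈ T, (w : S) * r * t ∈ A := by
    intro t ht
    have hsplit : w = (st ⟨t, ht⟩ * ut ⟨t, ht⟩) *
        ∏ t' ∈ T.attach.erase ⟨t, ht⟩, (st t' * ut t') := by
      rw [hw, ← Finset.mul_prod_erase _ _ (T.mem_attach ⟨t, ht⟩)]
    have : (w : S) * r * t
        = ((∏ t' ∈ T.attach.erase ⟨t, ht⟩, (st t' * ut t') : M) : S)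
          * ((ut ⟨t, ht⟩ : S) * (r * t * st ⟨t, ht⟩)) := by
      rw [hsplit]; push_cast; ring
    rw [this]
    exact A.mul_mem_left _ (hA ⟨t, ht⟩)
  have hwr : (w : S) * r ∈ A.colon I := by
    rw [Submodule.mem_colon]
    intro p hp
    rw [← hT] at hp
    rw [smul_eq_mul]
    induction hp using Submodule.span_induction with
    | mem x hx => exact hwmem x hx
    | zero => rw [mul_zero]; exact A.zero_mem
    | add x y _ _ hx hy => rw [mul_add]; exact A.add_mem hx hy
    | smul c x _ hx =>
      rw [smul_eq_mul, show (w : S) * r * (c * x) = c * ((w : S) * r * x) by ring]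
      exact A.mul_mem_left _ hx
  refine (IsLocalization.mem_map_algebraMap_iff M S').2
    ⟨⟨⟨(w : S) * r, hwr⟩, w * s⟩, ?_⟩
  simp only [Submonoid.coe_mul, _root_.map_mul]
  rw [← hrs]
  ring

lemma map_colon_le_loc_colon (I A : Ideal S) :
    (A.colon I).map (algebraMap S S')
      ≤ (A.map (algebraMap S S')).colon (I.map (algebraMap S S')) := by
  intro x hx
  rw [Submodule.mem_colon]
  intro p hp
  rw [smul_eq_mul]
  have h1 : (A.colon I).map (algebraMap S S') * I.map (algebraMap S S')
      ≤ A.map (algebraMap S S') := by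
    rw [← Ideal.map_mul]
    apply Ideal.map_mono
    refine Ideal.mul_le.2 fun a ha b hb => ?_
    have := Submodule.mem_colon.1 ha b hb
    rwa [smul_eq_mul] at this
  exact h1 (Ideal.mul_mem_mul hx hp)

lemma away_pullback (f x : S) (K : Ideal S)
    (h : algebraMap S (Localization.Away f) x
      ∈ K.map (algebraMap S (Localization.Away f))) :
    ∃ n : ℕ, f ^ n * x ∈ K := by
  obtain ⟨⟨k, s⟩, hk⟩ :=
    (IsLocalization.mem_map_algebraMap_iff (Submonoid.powers f)
      (Localization.Away f)).1 h
  dsimp only at hk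
  obtain ⟨n, hn⟩ := s.2
  have key : algebraMap S (Localization.Away f) (x * f ^ n)
      = algebraMap S (Localization.Away f) (k : S) := by
    have hn' : f ^ n = (s : S) := hn
    rw [_root_.map_mul, hn', ← hk]
  obtain ⟨u, hu⟩ := (IsLocalization.eq_iff_exists (Submonoid.powers f) _).1 key
  obtain ⟨m, hm⟩ := u.2
  refine ⟨m + n, ?_⟩
  have : f ^ (m + n) * x = (u : S) * (x * f ^ n) := by rw [← hm, pow_add]; ring
  rw [this, hu]
  exact K.mul_mem_left _ k.2

end LocalizationAux

/-- An ideal `I` of a commutative ring `R` is a principal element of the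
quantale `Idl(R)` (meet principal and join principal, with residuation given by the colon
ideal) if and only if `I` is finitely generated and locally principal. -/
theorem principal_element_iff_fg_locally_principal {R : Type*} [CommRing R] (I : Ideal R) :
    ((∀ J B : Ideal R, I * (J.colon I ⊓ B) = J ⊓ (I * B)) ∧
      (∀ J A : Ideal R, (I * J ⊔ A).colon I = J ⊔ A.colon I)) ↔
    (I.FG ∧ ∃ (n : ℕ) (f : Fin n → R), Ideal.span (Set.range f) = ⊤ ∧
      ∀ i : Fin n,
        (I.map (algebraMap R (Localization.Away (f i)))).IsPrincipal) := by
  constructor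
  · rintro ⟨hm, hj⟩
    set Ann := (⊥ : Ideal R).colon I with hAnn
    have key : ∀ J : Ideal R, J ≤ I → I * (J.colon I) = J := by
      intro J hJ
      have h := hm J ⊤
      rwa [inf_top_eq, Ideal.mul_top, inf_eq_left.2 hJ] at h
    have keytop : ∀ C : Ideal R, I ≤ I * C → C ⊔ Ann = ⊤ := by
      intro C hC
      have h2 : (I * C).colon I = ⊤ := by
        rw [eq_top_iff]
        intro r _
        rw [Submodule.mem_colon]
        intro p hp
        rw [smul_eq_mul]
        exact hC (I.mul_mem_left r hp)
      have h := hj C ⊥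
      rw [sup_bot_eq, h2] at h
      exact h.symm
    have hIAnn : I * Ann = ⊥ := by
      rw [eq_bot_iff]
      refine Ideal.mul_le.2 fun r hr s hs => ?_
      have h := Submodule.mem_colon.1 hs r hr
      rwa [smul_eq_mul, mul_comm] at h
    have hFG : I.FG := by
      have hdir : Directed (· ≤ ·)
          (fun J : {J : Ideal R // J.FG ∧ J ≤ I} => J.1.colon I ⊔ Ann) := by
        intro J1 J2
        refine ⟨⟨J1.1 ⊔ J2.1, ⟨Submodule.FG.sup J1.2.1 J2.2.1, sup_le J1.2.2 J2.2.2⟩⟩, ?_, ?_⟩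
        · exact sup_le_sup (Submodule.colon_mono le_sup_left le_rfl) le_rfl
        · exact sup_le_sup (Submodule.colon_mono le_sup_right le_rfl) le_rfl
      have hIC : I ≤ I * ⨆ J : {J : Ideal R // J.FG ∧ J ≤ I}, J.1.colon I := by
        intro x hx
        have hJx : Ideal.span {x} ≤ I := (Ideal.span_singleton_le_iff_mem I).2 hx
        have hmem : x ∈ I * ((Ideal.span {x}).colon I) := by
          rw [key _ hJx]
          exact Ideal.mem_span_singleton_self x
        exact Ideal.mul_mono_right
          (le_iSup (fun J : {J : Ideal R // J.FG ∧ J ≤ I} => J.1.colon I)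
            ⟨Ideal.span {x}, ⟨Submodule.fg_span_singleton x, hJx⟩⟩) hmem
      have hone : (1 : R) ∈
          ⨆ J : {J : Ideal R // J.FG ∧ J ≤ I}, (J.1.colon I ⊔ Ann) := by
        have hle : (⊤ : Ideal R) ≤ ⨆ J : {J : Ideal R // J.FG ∧ J ≤ I},
            (J.1.colon I ⊔ Ann) := by
          rw [← keytop _ hIC]
          refine sup_le (iSup_le fun J => le_trans le_sup_left
            (le_iSup (fun J : {J : Ideal R // J.FG ∧ J ≤ I} => J.1.colon I ⊔ Ann) J)) ?_
          exact le_trans le_sup_right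
            (le_iSup (fun J : {J : Ideal R // J.FG ∧ J ≤ I} => J.1.colon I ⊔ Ann)
              ⟨⊥, ⟨Submodule.fg_bot, bot_le⟩⟩)
        exact hle Submodule.mem_top
      haveI : Nonempty {J : Ideal R // J.FG ∧ J ≤ I} :=
        ⟨⟨⊥, ⟨Submodule.fg_bot, bot_le⟩⟩⟩
      obtain ⟨J, hJ⟩ := (Submodule.mem_iSup_of_directed _ hdir).1 hone
      have hFtop : J.1.colon I ⊔ Ann = ⊤ := (Ideal.eq_top_iff_one _).2 hJ
      have hIJ : I = J.1 := by
        have h4 : I * (J.1.colon I ⊔ Ann) = J.1 := by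
          rw [Ideal.mul_sup, key J.1 J.2.2, hIAnn, sup_bot_eq]
        rw [← h4, hFtop, Ideal.mul_top]
      rw [hIJ]
      exact J.2.1
    refine ⟨hFG, ?_⟩
    obtain ⟨m, g, hg⟩ := Submodule.fg_iff_exists_fin_generating_family.1 hFG
    rw [Ideal.submodule_span_eq] at hg
    have hgI : ∀ j, g j ∈ I := fun j => by
      rw [← hg]; exact Ideal.subset_span (Set.mem_range_self j)
    have hIC : I ≤ I * ⨆ j : Fin m, (Ideal.span {g j}).colon I := by
      have h1 : ∀ j : Fin m, Ideal.span {g j}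
          ≤ I * ⨆ j : Fin m, (Ideal.span {g j}).colon I := fun j => by
        rw [← key _ ((Ideal.span_singleton_le_iff_mem I).2 (hgI j))]
        exact Ideal.mul_mono_right (le_iSup (fun j => (Ideal.span {g j}).colon I) j)
      calc I = Ideal.span (Set.range g) := hg.symm
        _ ≤ _ := by
          rw [← Ideal.submodule_span_eq, Submodule.span_range_eq_iSup]
          exact iSup_le fun j => by
            rw [Ideal.submodule_span_eq] at *
            exact h1 j
    have htop : (⨆ j : Fin m, (Ideal.span {g j}).colon I) ⊔ Ann = ⊤ := keytop _ hIC
    set K : Fin (m + 1) → Ideal R :=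
      Fin.cons Ann (fun j => (Ideal.span {g j}).colon I) with hK
    have hKtop : ⨆ i, K i = ⊤ := by
      rw [eq_top_iff, ← htop]
      refine sup_le (iSup_le fun j => ?_) ?_
      · have h := le_iSup K j.succ
        rwa [hK, Fin.cons_succ] at h
      · have h := le_iSup K 0
        rwa [hK, Fin.cons_zero] at h
    have hone : (1 : R) ∈ ⨆ i, K i := by rw [hKtop]; exact Submodule.mem_top
    obtain ⟨c, hc, hcsum⟩ := (Submodule.mem_iSup_iff_exists_finsupp K 1).1 hone
    refine ⟨m + 1, fun i => c i, ?_, ?_⟩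
    · rw [Ideal.eq_top_iff_one, ← hcsum, Finsupp.sum]
      exact Submodule.sum_mem _ fun i _ => Ideal.subset_span (Set.mem_range_self i)
    · intro i
      induction i using Fin.cases with
      | zero =>
        have hc0 : c 0 ∈ Ann := by
          have h := hc 0
          rwa [hK, Fin.cons_zero] at h
        have hmap : I.map (algebraMap R (Localization.Away (c 0))) = ⊥ := by
          rw [eq_bot_iff, Ideal.map_le_iff_le_comap]
          intro x hx
          have hx0 : c 0 * x = 0 := by
            have h := Submodule.mem_colon.1 hc0 x hx
            rwa [smul_eq_mul, Submodule.mem_bot] at h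
          have h0 : algebraMap R (Localization.Away (c 0)) (c 0)
              * algebraMap R (Localization.Away (c 0)) x = 0 := by
            rw [← _root_.map_mul, hx0]
            exact map_zero (algebraMap R (Localization.Away (c 0)))
          have hu : IsUnit (algebraMap R (Localization.Away (c 0)) (c 0)) :=
            IsLocalization.map_units (Localization.Away (c 0))
              (⟨c 0, Submonoid.mem_powers _⟩ : Submonoid.powers (c 0))
          rw [Ideal.mem_comap, Submodule.mem_bot]
          exact (IsUnit.mul_right_eq_zero hu).1 h0
        rw [hmap]
        exact ⟨⟨0, (Submodule.span_zero_singleton _).symm⟩⟩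
      | succ j =>
        have hcj : c j.succ ∈ (Ideal.span {g j}).colon I := by
          have h := hc j.succ
          rwa [hK, Fin.cons_succ] at h
        refine ⟨⟨algebraMap R (Localization.Away (c j.succ)) (g j), ?_⟩⟩
        rw [Ideal.submodule_span_eq]
        apply le_antisymm
        · rw [Ideal.map_le_iff_le_comap]
          intro x hx
          obtain ⟨r, hr⟩ : ∃ r, r * g j = c j.succ * x := by
            have h := Submodule.mem_colon.1 hcj x hx
            rw [smul_eq_mul] at h
            exact Ideal.mem_span_singleton'.1 h
          have hu : IsUnit (algebraMap R (Localization.Away (c j.succ)) (c j.succ)) :=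
            IsLocalization.map_units (Localization.Away (c j.succ))
              (⟨c j.succ, Submonoid.mem_powers _⟩ : Submonoid.powers (c j.succ))
          rw [Ideal.mem_comap, Ideal.mem_span_singleton']
          refine ⟨↑hu.unit⁻¹ * algebraMap R (Localization.Away (c j.succ)) r, ?_⟩
          have h1 : algebraMap R (Localization.Away (c j.succ)) r
              * algebraMap R (Localization.Away (c j.succ)) (g j)
              = algebraMap R (Localization.Away (c j.succ)) (c j.succ)
                * algebraMap R (Localization.Away (c j.succ)) x := by
            rw [← _root_.map_mul, ← _root_.map_mul, hr]
          calc ↑hu.unit⁻¹ * algebraMap R (Localization.Away (c j.succ)) r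
                * algebraMap R (Localization.Away (c j.succ)) (g j)
              = ↑hu.unit⁻¹ * (algebraMap R (Localization.Away (c j.succ)) (c j.succ)
                * algebraMap R (Localization.Away (c j.succ)) x) := by
                rw [mul_assoc, h1]
            _ = (↑hu.unit⁻¹ * algebraMap R (Localization.Away (c j.succ)) (c j.succ))
                * algebraMap R (Localization.Away (c j.succ)) x := by ring
            _ = algebraMap R (Localization.Away (c j.succ)) x := by
                rw [IsUnit.val_inv_mul hu, one_mul]
        · rw [Ideal.span_singleton_le_iff_mem]
          exact Ideal.mem_map_of_mem _ (hgI j)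
  · rintro ⟨hFG, n, f, hf, hP⟩
    constructor
    · intro J B
      apply le_antisymm
      · refine le_inf ?_ (Ideal.mul_mono_right inf_le_right)
        refine Ideal.mul_le.2 fun r hr s hs => ?_
        obtain ⟨hs1, hs2⟩ := Submodule.mem_inf.1 hs
        have h := Submodule.mem_colon.1 hs1 r hr
        rw [smul_eq_mul] at h
        rw [mul_comm]
        exact h
      · intro x hx
        obtain ⟨hx1, hx2⟩ := Submodule.mem_inf.1 hx
        refine Submodule.mem_of_span_eq_top_of_smul_pow_mem _ _ hf _ fun r => ?_
        obtain ⟨i, hi⟩ := r.2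
        obtain ⟨a, ha⟩ := (hP i).principal
        rw [Ideal.submodule_span_eq] at ha
        have hx' : algebraMap R (Localization.Away (f i)) x
            ∈ (I * (J.colon I ⊓ B)).map (algebraMap R (Localization.Away (f i))) := by
          set φ := algebraMap R (Localization.Away (f i)) with hφ
          have h1 : φ x ∈ J.map φ ⊓ (I.map φ * B.map φ) := by
            refine Submodule.mem_inf.2 ⟨Ideal.mem_map_of_mem _ hx1, ?_⟩
            rw [← Ideal.map_mul]
            exact Ideal.mem_map_of_mem _ hx2
          rw [ha, ← span_singleton_meetP a (J.map φ) (B.map φ), ← ha] at h1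
          have h2 : I.map φ * ((J.map φ).colon (I.map φ) ⊓ B.map φ)
              ≤ (I * (J.colon I ⊓ B)).map φ := by
            rw [Ideal.map_mul]
            refine Ideal.mul_mono_right ?_
            refine le_trans (inf_le_inf_right _
              (loc_colon_le_map_colon (Localization.Away (f i))
                (Submonoid.powers (f i)) hFG J)) ?_
            exact loc_map_inf (Localization.Away (f i)) (Submonoid.powers (f i))
              (J.colon I) B
          exact h2 h1
        obtain ⟨k, hk⟩ := away_pullback (f i) x _ hx'
        refine ⟨k, ?_⟩
        rw [← hi, smul_eq_mul]
        exact hk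
    · intro J A
      apply le_antisymm
      · intro x hx
        refine Submodule.mem_of_span_eq_top_of_smul_pow_mem _ _ hf _ fun r => ?_
        obtain ⟨i, hi⟩ := r.2
        obtain ⟨a, ha⟩ := (hP i).principal
        rw [Ideal.submodule_span_eq] at ha
        have hx' : algebraMap R (Localization.Away (f i)) x
            ∈ (J ⊔ A.colon I).map (algebraMap R (Localization.Away (f i))) := by
          set φ := algebraMap R (Localization.Away (f i)) with hφ
          have h1 : φ x ∈ ((I * J ⊔ A).colon I).map φ := Ideal.mem_map_of_mem _ hx
          have h2 : φ x ∈ ((I * J ⊔ A).map φ).colon (I.map φ) :=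
            map_colon_le_loc_colon (Localization.Away (f i)) I (I * J ⊔ A) h1
          rw [Ideal.map_sup, Ideal.map_mul, ha,
            span_singleton_joinP a (J.map φ) (A.map φ), ← ha] at h2
          have h3 : J.map φ ⊔ (A.map φ).colon (I.map φ) ≤ (J ⊔ A.colon I).map φ := by
            rw [Ideal.map_sup]
            exact sup_le le_sup_left
              (le_trans (loc_colon_le_map_colon (Localization.Away (f i))
                (Submonoid.powers (f i)) hFG A) le_sup_right)
          exact h3 h2
        obtain ⟨k, hk⟩ := away_pullback (f i) x _ hx'
        refine ⟨k, ?_⟩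
        rw [← hi, smul_eq_mul]
        exact hk
      · refine sup_le ?_ (Submodule.colon_mono le_sup_right le_rfl)
        intro j hj'
        rw [Submodule.mem_colon]
        intro p hp
        rw [smul_eq_mul]
        have h := Ideal.mul_mem_mul hp hj'
        have heq : j * p = p * j := mul_comm _ _
        rw [heq]
        exact Submodule.mem_sup_left h
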